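/- Let F: [0,1]^n → [0,∞) be a nonnegative continuously differentiable DR-submodular function. Then: (1) ⟨∇F(x), y⟩ ≥ F(x + y) − F(x) for every x ∈ [0,1]^n and every y ≥ 0 with x + y ≤ 1; and (2) ⟨∇F(x), y⟩ ≤ F(x) − F(x − y) for every x ∈ [0,1]^n and every y ≥ 0 with x − y ≥ 0. -/

import Mathlib

open scoped InnerProductSpace
open Pointwise

noncomputable section

/-- Vectors in `ℝ^n`, with the Euclidean (ℓ₂) norm and inner product. -/
abbrev Vec (n : ℕ) := EuclideanSpace ℝ (Fin n)

/-- Membership in the box `[0,1]^n`. -/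
def inBox {n : ℕ} (x : Vec n) : Prop := ∀ j, 0 ≤ x j ∧ x j ≤ 1

/-- Coordinate-wise (Hadamard) product `x ⊙ y`. -/
def had {n : ℕ} (x y : Vec n) : Vec n := WithLp.toLp 2 (fun j => x j * y j)

/-- Coordinate-wise probabilistic sum `x ⊛ y`. -/
def psum {n : ℕ} (x y : Vec n) : Vec n := WithLp.toLp 2 (fun j => x j + y j - x j * y j)

/-- The vector `1 - x` (coordinate-wise). -/
def oneM {n : ℕ} (x : Vec n) : Vec n := WithLp.toLp 2 (fun j => 1 - x j)

/-- ℓ∞-norm. -/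
def normInf {n : ℕ} (x : Vec n) : ℝ := ⨆ j, |x j|

/-- DR-submodularity of `F : [0,1]^n → ℝ`. -/
def DRSubmodular {n : ℕ} (F : Vec n → ℝ) : Prop :=
  ∀ a b : Vec n, inBox a → inBox b → (∀ j, a j ≤ b j) →
    ∀ k : ℝ, 0 < k → ∀ i : Fin n, inBox (b + EuclideanSpace.single i k) →
      F (b + EuclideanSpace.single i k) - F b ≤ F (a + EuclideanSpace.single i k) - F a

/-- `P` is down-closed (with respect to the domain `[0,1]^n`). -/
def downClosed {n : ℕ} (P : Set (Vec n)) : Prop :=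
  ∀ x y : Vec n, (∀ j, 0 ≤ x j) → (∀ j, x j ≤ y j) → y ∈ P → x ∈ P

namespace Stmt0Aux

variable {n : ℕ}

lemma single_smul (j : Fin n) (k : ℝ) :
    EuclideanSpace.single j k = k • EuclideanSpace.single j (1:ℝ) := by
  ext i
  simp only [EuclideanSpace.single_apply, PiLp.smul_apply, smul_eq_mul]
  split_ifs <;> simp

lemma add_single_apply (c : Vec n) (j : Fin n) (k : ℝ) (i : Fin n) :
    (c + k • EuclideanSpace.single j (1:ℝ)) i = c i + (if i = j then k else 0) := by
  simp only [PiLp.add_apply, PiLp.smul_apply, EuclideanSpace.single_apply, smul_eq_mul]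
  split_ifs <;> simp

lemma sub_single_apply (c : Vec n) (j : Fin n) (k : ℝ) (i : Fin n) :
    (c - k • EuclideanSpace.single j (1:ℝ)) i = c i - (if i = j then k else 0) := by
  simp only [PiLp.sub_apply, PiLp.smul_apply, EuclideanSpace.single_apply, smul_eq_mul]
  split_ifs <;> simp

lemma line_hasDerivAt (F : Vec n → ℝ) (g c v : Vec n) (t₀ : ℝ)
    (h : HasGradientAt F g (c + t₀ • v)) :
    HasDerivAt (fun t : ℝ => F (c + t • v)) ⟪g, v⟫_ℝ t₀ := by
  have hL : HasDerivAt (fun t : ℝ => c + t • v) v t₀ := by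
    simpa using ((hasDerivAt_id t₀).smul_const v).const_add c
  have := h.hasFDerivAt.comp_hasDerivAt t₀ hL
  exact this

lemma slope_tendsto (F : Vec n → ℝ) (g c : Vec n) (j : Fin n)
    (h : HasGradientAt F g c) :
    Filter.Tendsto (fun k : ℝ => (F (c + k • EuclideanSpace.single j (1:ℝ)) - F c) / k)
      (nhdsWithin 0 {(0:ℝ)}ᶜ) (nhds (g j)) := by
  have h0 : HasDerivAt (fun t : ℝ => F (c + t • EuclideanSpace.single j (1:ℝ)))
      ⟪g, EuclideanSpace.single j (1:ℝ)⟫_ℝ 0 :=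
    line_hasDerivAt F g c _ 0 (by simpa using h)
  have h1 := hasDerivAt_iff_tendsto_slope.1 h0
  have h2 : ⟪g, EuclideanSpace.single j (1:ℝ)⟫_ℝ = g j := by
    simp [EuclideanSpace.inner_single_right]
  rw [h2] at h1
  refine h1.congr fun k => ?_
  simp [slope_def_field]

lemma Ioi_le_compl : (nhdsWithin (0:ℝ) (Set.Ioi 0)) ≤ nhdsWithin 0 {(0:ℝ)}ᶜ :=
  nhdsWithin_mono 0 (fun x hx => ne_of_gt hx)

lemma slope_right (F : Vec n → ℝ) (g c : Vec n) (j : Fin n)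
    (h : HasGradientAt F g c) :
    Filter.Tendsto (fun k : ℝ => (F (c + k • EuclideanSpace.single j (1:ℝ)) - F c) / k)
      (nhdsWithin 0 (Set.Ioi 0)) (nhds (g j)) :=
  (slope_tendsto F g c j h).mono_left Ioi_le_compl

lemma slope_left (F : Vec n → ℝ) (g c : Vec n) (j : Fin n)
    (h : HasGradientAt F g c) :
    Filter.Tendsto (fun k : ℝ => (F c - F (c - k • EuclideanSpace.single j (1:ℝ))) / k)
      (nhdsWithin 0 (Set.Ioi 0)) (nhds (g j)) := by
  have hneg : Filter.Tendsto (fun k : ℝ => -k) (nhdsWithin 0 (Set.Ioi 0))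
      (nhdsWithin 0 {(0:ℝ)}ᶜ) := by
    apply tendsto_nhdsWithin_of_tendsto_nhds_of_eventually_within
    · simpa using (continuous_neg.tendsto (0:ℝ)).mono_left nhdsWithin_le_nhds
    · filter_upwards [self_mem_nhdsWithin] with k hk
      exact ne_of_lt (neg_neg_of_pos hk)
  have := (slope_tendsto F g c j h).comp hneg
  refine this.congr fun k => ?_
  simp only [Function.comp]
  rw [neg_smul, ← sub_eq_add_neg, div_neg, neg_div', neg_sub]

lemma grad_mono (F : Vec n → ℝ) (G : Vec n → Vec n)
    (hGrad : ∀ x, inBox x → HasGradientAt F (G x) x)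
    (hDR : DRSubmodular F) {a b : Vec n} (ha : inBox a) (hb : inBox b)
    (hab : ∀ j, a j ≤ b j) (j : Fin n) : G b j ≤ G a j := by
  have hga := hGrad a ha
  have hgb := hGrad b hb
  rcases lt_or_eq_of_le (hb j).2 with hbj | hbj
  · -- b j < 1 : use right slopes at a and b
    refine le_of_tendsto_of_tendsto (slope_right F (G b) b j hgb)
      (slope_right F (G a) a j hga) ?_
    have hIoo : Set.Ioo (0:ℝ) (1 - b j) ∈ nhdsWithin (0:ℝ) (Set.Ioi 0) :=
      Ioo_mem_nhdsGT_of_mem ⟨le_refl _, by linarith⟩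
    filter_upwards [hIoo] with k hk
    have hk0 : (0:ℝ) < k := hk.1
    have hbox : inBox (b + EuclideanSpace.single j k) := by
      intro i
      rw [single_smul, add_single_apply]
      split_ifs with h
      · subst h; constructor
        · have := (hb i).1; linarith
        · have := hk.2; linarith
      · simpa using hb i
    have := hDR a b ha hb hab k hk0 j hbox
    rw [single_smul j k] at this
    exact div_le_div_of_nonneg_right this hk0.le
  · rcases lt_or_eq_of_le (ha j).2 with haj | haj
    · -- b j = 1, a j < 1 : left slope at b vs right slope at a
      refine le_of_tendsto_of_tendsto (slope_left F (G b) b j hgb)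
        (slope_right F (G a) a j hga) ?_
      have hIoo : Set.Ioo (0:ℝ) (1 - a j) ∈ nhdsWithin (0:ℝ) (Set.Ioi 0) :=
        Ioo_mem_nhdsGT_of_mem ⟨le_refl _, by linarith⟩
      filter_upwards [hIoo] with k hk
      have hk0 : (0:ℝ) < k := hk.1
      have hk1 : k < 1 - a j := hk.2
      have hboxb : inBox (b - k • EuclideanSpace.single j (1:ℝ)) := by
        intro i
        rw [sub_single_apply]
        split_ifs with h
        · subst h; rw [hbj]; constructor
          · have := ha i; linarith
          · linarith
        · simpa using hb i
      have hle : ∀ i, a i ≤ (b - k • EuclideanSpace.single j (1:ℝ)) i := by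
        intro i
        rw [sub_single_apply]
        split_ifs with h
        · subst h; rw [hbj]; linarith
        · simpa using hab i
      have hcanc : b - k • EuclideanSpace.single j (1:ℝ) + EuclideanSpace.single j k = b := by
        rw [single_smul j k]; abel
      have := hDR a (b - k • EuclideanSpace.single j (1:ℝ)) ha hboxb hle k hk0 j
        (by rw [hcanc]; exact hb)
      rw [hcanc] at this
      rw [single_smul j k] at this
      exact div_le_div_of_nonneg_right this hk0.le
    · -- a j = 1 (hence b j = 1) : left slopes at both
      refine le_of_tendsto_of_tendsto (slope_left F (G b) b j hgb)
        (slope_left F (G a) a j hga) ?_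
      have hIoo : Set.Ioo (0:ℝ) 1 ∈ nhdsWithin (0:ℝ) (Set.Ioi 0) :=
        Ioo_mem_nhdsGT_of_mem ⟨le_refl _, zero_lt_one⟩
      filter_upwards [hIoo] with k hk
      have hk0 : (0:ℝ) < k := hk.1
      have hk1 : k < 1 := hk.2
      have hboxa : inBox (a - k • EuclideanSpace.single j (1:ℝ)) := by
        intro i
        rw [sub_single_apply]
        split_ifs with h
        · subst h; rw [haj]; constructor <;> linarith
        · simpa using ha i
      have hboxb : inBox (b - k • EuclideanSpace.single j (1:ℝ)) := by
        intro i
        rw [sub_single_apply]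
        split_ifs with h
        · subst h; rw [hbj]; constructor
          · linarith
          · linarith
        · simpa using hb i
      have hle : ∀ i, (a - k • EuclideanSpace.single j (1:ℝ)) i
          ≤ (b - k • EuclideanSpace.single j (1:ℝ)) i := by
        intro i
        rw [sub_single_apply, sub_single_apply]
        have := hab i; split_ifs <;> linarith
      have hcanca : a - k • EuclideanSpace.single j (1:ℝ) + EuclideanSpace.single j k = a := by
        rw [single_smul j k]; abel
      have hcancb : b - k • EuclideanSpace.single j (1:ℝ) + EuclideanSpace.single j k = b := by
        rw [single_smul j k]; abel
      have := hDR (a - k • EuclideanSpace.single j (1:ℝ))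
        (b - k • EuclideanSpace.single j (1:ℝ)) hboxa hboxb hle k hk0 j
        (by rw [hcancb]; exact hb)
      rw [hcanca, hcancb] at this
      exact div_le_div_of_nonneg_right this hk0.le

lemma inner_mono (u v y : Vec n) (huv : ∀ j, u j ≤ v j) (hy : ∀ j, 0 ≤ y j) :
    ⟪u, y⟫_ℝ ≤ ⟪v, y⟫_ℝ := by
  simp only [PiLp.inner_apply, RCLike.inner_apply, conj_trivial]
  exact Finset.sum_le_sum fun i _ => mul_le_mul_of_nonneg_left (huv i) (hy i)

end Stmt0Aux

/-- Lemma 2.1 / `lem:DR_properties`: for a nonnegative continuously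
differentiable DR-submodular `F` on `[0,1]^n` with gradient `G`:
(1) `⟪∇F(x), y⟫ ≥ F(x+y) − F(x)` whenever `x ∈ [0,1]^n`, `y ≥ 0` and `x + y ≤ 1`;
(2) `⟪∇F(x), y⟫ ≤ F(x) − F(x−y)` whenever `x ∈ [0,1]^n`, `y ≥ 0` and `x − y ≥ 0`. -/
theorem stmt_0 {n : ℕ} (F : Vec n → ℝ) (G : Vec n → Vec n)
    (hF0 : ∀ x, inBox x → 0 ≤ F x)
    (hGrad : ∀ x, inBox x → HasGradientAt F (G x) x)
    (hGcont : ContinuousOn G {x : Vec n | inBox x})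
    (hDR : DRSubmodular F) :
    (∀ x y : Vec n, inBox x → (∀ j, 0 ≤ y j) → (∀ j, x j + y j ≤ 1) →
      F (x + y) - F x ≤ ⟪G x, y⟫_ℝ) ∧
    (∀ x y : Vec n, inBox x → (∀ j, 0 ≤ y j) → (∀ j, 0 ≤ x j - y j) →
      ⟪G x, y⟫_ℝ ≤ F x - F (x - y)) := by
  constructor
  · intro x y hx hy hxy
    set C := ⟪G x, y⟫_ℝ with hC
    have hbox : ∀ t ∈ Set.Icc (0:ℝ) 1, inBox (x + t • y) := by
      intro t ht j
      have h1 : (x + t • y) j = x j + t * y j := by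
        simp [PiLp.add_apply, PiLp.smul_apply, smul_eq_mul]
      rw [h1]
      have h2 : t * y j ≤ y j := by
        have := mul_le_of_le_one_left (hy j) ht.2
        simpa using this
      constructor
      · have := (hx j).1; have := mul_nonneg ht.1 (hy j); linarith
      · have := hxy j; linarith
    have hderiv : ∀ t ∈ Set.Icc (0:ℝ) 1,
        HasDerivAt (fun s : ℝ => C * s - F (x + s • y)) (C - ⟪G (x + t • y), y⟫_ℝ) t := by
      intro t ht
      have hF : HasDerivAt (fun s : ℝ => F (x + s • y)) ⟪G (x + t • y), y⟫_ℝ t :=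
        Stmt0Aux.line_hasDerivAt F _ x y t (hGrad _ (hbox t ht))
      have hCt : HasDerivAt (fun s : ℝ => C * s) C t := by
        simpa using (hasDerivAt_id t).const_mul C
      exact hCt.sub hF
    have hmono : MonotoneOn (fun s : ℝ => C * s - F (x + s • y)) (Set.Icc 0 1) := by
      apply monotoneOn_of_hasDerivWithinAt_nonneg (convex_Icc 0 1)
        (f' := fun t => C - ⟪G (x + t • y), y⟫_ℝ)
      · intro t ht
        exact ((hderiv t ht).continuousAt).continuousWithinAt
      · intro t ht
        rw [interior_Icc] at ht
        exact ((hderiv t (Set.Ioo_subset_Icc_self ht)).hasDerivWithinAt)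
      · intro t ht
        rw [interior_Icc] at ht
        rw [sub_nonneg]
        refine Stmt0Aux.inner_mono _ _ y ?_ hy
        intro j
        refine Stmt0Aux.grad_mono F G hGrad hDR hx (hbox t (Set.Ioo_subset_Icc_self ht)) ?_ j
        intro i
        have h1 : (x + t • y) i = x i + t * y i := by
          simp [PiLp.add_apply, PiLp.smul_apply, smul_eq_mul]
        rw [h1]
        have := mul_nonneg (le_of_lt ht.1) (hy i); linarith
    have h01 := hmono (Set.mem_Icc.2 ⟨le_refl (0:ℝ), zero_le_one⟩)
      (Set.mem_Icc.2 ⟨zero_le_one, le_refl (1:ℝ)⟩) zero_le_one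
    simp only [mul_zero, mul_one, zero_smul, add_zero, one_smul] at h01
    linarith
  · intro x y hx hy hxy
    set C := ⟪G x, y⟫_ℝ with hC
    have hbox : ∀ t ∈ Set.Icc (0:ℝ) 1, inBox (x - t • y) := by
      intro t ht j
      have h1 : (x - t • y) j = x j - t * y j := by
        simp [PiLp.sub_apply, PiLp.smul_apply, smul_eq_mul]
      rw [h1]
      have h2 : t * y j ≤ y j := by
        have := mul_le_of_le_one_left (hy j) ht.2
        simpa using this
      constructor
      · have := hxy j; linarith
      · have := (hx j).2; have := mul_nonneg ht.1 (hy j); linarith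
    have hderiv : ∀ t ∈ Set.Icc (0:ℝ) 1,
        HasDerivAt (fun s : ℝ => (-C) * s - F (x - s • y))
          ((-C) - (-⟪G (x - t • y), y⟫_ℝ)) t := by
      intro t ht
      have hF : HasDerivAt (fun s : ℝ => F (x - s • y)) (-⟪G (x - t • y), y⟫_ℝ) t := by
        have := Stmt0Aux.line_hasDerivAt F (G (x - t • y)) x (-y) t
          (by rw [smul_neg, ← sub_eq_add_neg]; exact hGrad _ (hbox t ht))
        simpa [smul_neg, ← sub_eq_add_neg, inner_neg_right] using this
      have hCt : HasDerivAt (fun s : ℝ => (-C) * s) (-C) t := by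
        simpa using (hasDerivAt_id t).const_mul (-C)
      exact hCt.sub hF
    have hmono : MonotoneOn (fun s : ℝ => (-C) * s - F (x - s • y)) (Set.Icc 0 1) := by
      apply monotoneOn_of_hasDerivWithinAt_nonneg (convex_Icc 0 1)
        (f' := fun t => (-C) - (-⟪G (x - t • y), y⟫_ℝ))
      · intro t ht
        exact ((hderiv t ht).continuousAt).continuousWithinAt
      · intro t ht
        rw [interior_Icc] at ht
        exact ((hderiv t (Set.Ioo_subset_Icc_self ht)).hasDerivWithinAt)
      · intro t ht
        rw [interior_Icc] at ht
        have hle : C ≤ ⟪G (x - t • y), y⟫_ℝ := by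
          refine Stmt0Aux.inner_mono _ _ y ?_ hy
          intro j
          refine Stmt0Aux.grad_mono F G hGrad hDR
            (hbox t (Set.Ioo_subset_Icc_self ht)) hx ?_ j
          intro i
          have h1 : (x - t • y) i = x i - t * y i := by
            simp [PiLp.sub_apply, PiLp.smul_apply, smul_eq_mul]
          rw [h1]
          have := mul_nonneg (le_of_lt ht.1) (hy i); linarith
        linarith
    have h01 := hmono (Set.mem_Icc.2 ⟨le_refl (0:ℝ), zero_le_one⟩)
      (Set.mem_Icc.2 ⟨zero_le_one, le_refl (1:ℝ)⟩) zero_le_one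
    simp only [mul_zero, mul_one, zero_smul, sub_zero, one_smul, neg_mul] at h01
    linarith
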